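/- (Proposition 6) Let L be a quasicontinuous domain, (x_j)_{j∈J} a net in L, I a nontrivial ideal on J, and x ∈ L. If for every nonempty finite G ⊆ L with G ≪ x one has {j ∈ J : x_j ∉ ↑G} ∈ I, then (x_j) GZS-converges to x with respect to I. -/
import Mathlib


open Set

universe u v

variable {L : Type u}

/-- The upper set `↑A = {y : ∃ a ∈ A, a ≤ y}`. -/
def upSet [Preorder L] (A : Set L) : Set L := {y | ∃ a ∈ A, a ≤ y}

/-- The lower set `↓A = {y : ∃ a ∈ A, y ≤ a}`. -/
def downSet [Preorder L] (A : Set L) : Set L := {y | ∃ a ∈ A, y ≤ a}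

/-- An ideal on `J`: a family of subsets closed under subsets and finite unions. -/
def IsIdeal {J : Type v} (I : Set (Set J)) : Prop :=
  (∀ A ∈ I, ∀ B : Set J, B ⊆ A → B ∈ I) ∧ ∀ A ∈ I, ∀ B ∈ I, A ∪ B ∈ I

/-- A (nonempty) directed family of nonempty finite subsets of `L`. -/
def DirectedFamily [Preorder L] (𝓕 : Set (Set L)) : Prop :=
  𝓕.Nonempty ∧ (∀ F ∈ 𝓕, F.Nonempty ∧ F.Finite) ∧
    ∀ E ∈ 𝓕, ∀ F ∈ 𝓕, ∃ H ∈ 𝓕, upSet H ⊆ upSet E ∩ upSet F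

/-- A dcpo: every nonempty directed subset has a supremum. -/
def IsDcpo (L : Type u) [PartialOrder L] : Prop :=
  ∀ D : Set L, D.Nonempty → DirectedOn (· ≤ ·) D → ∃ s, IsLUB D s

/-- A net index: a nonempty directed preordered set. -/
def IsNetIndex (J : Type v) [Preorder J] : Prop :=
  Nonempty J ∧ ∀ a b : J, ∃ c, a ≤ c ∧ b ≤ c

/-- The net `xj` GZS-converges (generalized ideal inf-limit) to `x` w.r.t. ideal `I`. -/
def GZSConv [Preorder L] {J : Type v} (xj : J → L) (I : Set (Set J)) (x : L) : Prop :=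
  ∃ 𝓕 : Set (Set L), DirectedFamily 𝓕 ∧ (⋂ F ∈ 𝓕, upSet F) ⊆ upSet {x} ∧
    ∀ F ∈ 𝓕, {j | xj j ∉ upSet F} ∈ I

/-- The net `xj` IS-converges (ideal inf-limit) to `x` w.r.t. ideal `I`. -/
def ISConv [Preorder L] {J : Type v} (xj : J → L) (I : Set (Set J)) (x : L) : Prop :=
  ∃ D : Set L, D.Nonempty ∧ DirectedOn (· ≤ ·) D ∧ (∃ s, IsLUB D s ∧ x ≤ s) ∧
    ∀ d ∈ D, {j | xj j ∉ upSet {d}} ∈ I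

/-- `G ≪ x` for a set `G`: every nonempty directed `D` with `x ≤ sup D` meets `↑G`. -/
def WayBelowSet [Preorder L] (G : Set L) (x : L) : Prop :=
  ∀ D : Set L, D.Nonempty → DirectedOn (· ≤ ·) D →
    ∀ s, IsLUB D s → x ≤ s → (D ∩ upSet G).Nonempty

/-- Scott open set. -/
def ScottOpen [Preorder L] (U : Set L) : Prop :=
  (∀ x ∈ U, ∀ y, x ≤ y → y ∈ U) ∧
    ∀ D : Set L, D.Nonempty → DirectedOn (· ≤ ·) D →
      ∀ s, IsLUB D s → s ∈ U → (D ∩ U).Nonempty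

/-- `fin(x)`: the nonempty finite subsets way below `x`. -/
def finOf [Preorder L] (x : L) : Set (Set L) :=
  {F | F.Nonempty ∧ F.Finite ∧ WayBelowSet F x}

/-- Quasicontinuous domain. -/
def QuasicontinuousDomain (L : Type u) [PartialOrder L] : Prop :=
  IsDcpo L ∧ ∀ x : L, DirectedFamily (finOf x) ∧ upSet {x} = ⋂ F ∈ finOf x, upSet F

/-- Ideal convergence of a net w.r.t. a topology `T`. -/
def IConv [Preorder L] {J : Type v} (T : TopologicalSpace L) (xj : J → L)
    (I : Set (Set J)) (x : L) : Prop :=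
  ∀ U : Set L, T.IsOpen U → x ∈ U → {j | xj j ∉ U} ∈ I

/-- The net `xj` GS-converges (generalized inf-limit) to `x`. -/
def GSConv [Preorder L] {J : Type v} [Preorder J] (xj : J → L) (x : L) : Prop :=
  ∃ 𝓕 : Set (Set L), DirectedFamily 𝓕 ∧ (⋂ F ∈ 𝓕, upSet F) ⊆ upSet {x} ∧
    ∀ F ∈ 𝓕, ∃ k : J, ∀ j : J, k ≤ j → xj j ∈ upSet F

/-- The generalized inf-limit topology `τ^{g-lim-inf}`. -/
def tauGLimInf (L : Type u) [PartialOrder L] : Set (Set L) :=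
  {U | ∀ (J : Type u) [Preorder J], IsNetIndex J →
      ∀ xj : J → L, ∀ x ∈ U, GSConv xj x → ∃ k : J, ∀ j : J, k ≤ j → xj j ∈ U}

/-- The generalized ideal inf-limit topology `τ^{g-I-lim-inf}`. -/
def tauGILimInf (L : Type u) [PartialOrder L] : Set (Set L) :=
  {U | ∀ (J : Type u) [Preorder J], IsNetIndex J →
      ∀ (xj : J → L) (I : Set (Set J)), IsIdeal I →
      ∀ x ∈ U, GZSConv xj I x → {j | xj j ∉ U} ∈ I}

/-- `x = glim_GZ (x_j)`: generalized ideal eventual-lower-bound limit. -/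
def GlimGZ [Preorder L] {J : Type v} (xj : J → L) (I : Set (Set J)) (x : L) : Prop :=
  GZSConv xj I x ∧
    ∀ F : Set L, F.Nonempty → F.Finite → {j | xj j ∉ upSet F} ∈ I → x ∈ upSet F

/-- The generalized ideal eventual-lower-bound limit topology `τ^{g-I}`. -/
def tauGIlb (L : Type u) [PartialOrder L] : Set (Set L) :=
  {U | ∀ (J : Type u) [Preorder J], IsNetIndex J →
      ∀ (xj : J → L) (I : Set (Set J)), IsIdeal I →
      ∀ x ∈ U, GlimGZ xj I x → {j | xj j ∉ U} ∈ I}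

/-- The Scott topology `σ(L)`. -/
def scottTop (L : Type u) [Preorder L] : TopologicalSpace L :=
  TopologicalSpace.generateFrom {U | ScottOpen U}

/-- The Lawson topology `λ(L) = σ(L) ∨ ω(L)`. -/
def lawsonTop (L : Type u) [Preorder L] : TopologicalSpace L :=
  TopologicalSpace.generateFrom ({U | ScottOpen U} ∪ {V | ∃ x : L, V = (upSet {x})ᶜ})

/-- Meet-continuity of a dcpo. -/
def MeetContinuous (L : Type u) [PartialOrder L] : Prop :=
  ∀ x : L, ∀ D : Set L, D.Nonempty → DirectedOn (· ≤ ·) D →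
    ∀ s, IsLUB D s → x ≤ s → x ∈ @closure L (scottTop L) (downSet {x} ∩ downSet D)

/-- Continuous domain: `⇓x` is nonempty, directed, with supremum `x`. -/
def ContinuousDomain (L : Type u) [PartialOrder L] : Prop :=
  IsDcpo L ∧ ∀ x : L, {y : L | WayBelowSet {y} x}.Nonempty ∧
    DirectedOn (· ≤ ·) {y : L | WayBelowSet {y} x} ∧ IsLUB {y : L | WayBelowSet {y} x} x

/-- **Proposition 6.** In a quasicontinuous domain, if `{j : x_j ∉ ↑G} ∈ I` for every
nonempty finite `G ≪ x`, then the net GZS-converges to `x` w.r.t. the nontrivial ideal `I`. -/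
theorem prop6 {L : Type u} [PartialOrder L] (hL : QuasicontinuousDomain L)
    {J : Type v} [Preorder J] (hJ : IsNetIndex J) (xj : J → L)
    (I : Set (Set J)) (hI : IsIdeal I) (hInt : (Set.univ : Set J) ∉ I) (x : L)
    (h : ∀ G : Set L, G.Nonempty → G.Finite → WayBelowSet G x →
        {j | xj j ∉ upSet G} ∈ I) :
    GZSConv xj I x := by
  refine ⟨finOf x, (hL.2 x).1, ?_, fun F hF => h F hF.1 hF.2.1 hF.2.2⟩
  rw [(hL.2 x).2]
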